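/- In a triangulated category T, thick^n_T(C) = smd(addΣ(C)^{∗n}), i.e. the n-th thickening of C equals the closure under retracts of the n-fold ∗-product of the additive-shift closure of C. -/

import Mathlib

open CategoryTheory CategoryTheory.Limits CategoryTheory.Pretriangulated

universe v u

variable {T : Type u} [Category.{v} T] [Preadditive T] [HasZeroObject T]
  [HasShift T ℤ] [∀ n : ℤ, (CategoryTheory.shiftFunctor T n).Additive]
  [HasBinaryBiproducts T] [Pretriangulated T]

/-- The objects of the smallest strict full subcategory containing `C` that is closed under
finite coproducts, retracts and all shifts (the first thickening `thick¹(C)`). -/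
inductive thickOne (C : T) : T → Prop
  | base : thickOne C C
  | zero (X : T) : IsZero X → thickOne C X
  | shift (X : T) (n : ℤ) : thickOne C X → thickOne C (X⟦n⟧)
  | coprod (X Y : T) : thickOne C X → thickOne C Y → thickOne C (X ⊞ Y)
  | retract (X Y : T) (i : X ⟶ Y) (r : Y ⟶ X) : i ≫ r = 𝟙 X → thickOne C Y → thickOne C X
  | iso (X Y : T) (e : X ≅ Y) : thickOne C X → thickOne C Y

/-- The objects of `addΣ(C)`: the smallest full subcategory containing `C` closed under
finite coproducts, all shifts and isomorphisms (no retracts). -/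
inductive addShift (C : T) : T → Prop
  | base : addShift C C
  | zero (X : T) : IsZero X → addShift C X
  | shift (X : T) (n : ℤ) : addShift C X → addShift C (X⟦n⟧)
  | coprod (X Y : T) : addShift C X → addShift C Y → addShift C (X ⊞ Y)
  | iso (X Y : T) (e : X ≅ Y) : addShift C X → addShift C Y

/-- Closure of a class of objects under retracts (direct summands). -/
def smd (A : Set T) : Set T :=
  {X | ∃ Y ∈ A, ∃ (i : X ⟶ Y) (r : Y ⟶ X), i ≫ r = 𝟙 X}

/-- The ∗-product: objects `L` occurring in a distinguished triangle `M → L → N → ΣM`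
with `M ∈ A` and `N ∈ B`. -/
def star (A B : Set T) : Set T :=
  {L | ∃ (M N : T) (f : M ⟶ L) (g : L ⟶ N) (h : N ⟶ M⟦(1 : ℤ)⟧),
    M ∈ A ∧ N ∈ B ∧ Triangle.mk f g h ∈ distTriang T}

/-- The `n`-th thickening `thickⁿ(C)` of an object `C` in a triangulated category. -/
def thickN (C : T) : ℕ → Set T
  | 0 => {X | IsZero X}
  | 1 => {X | thickOne C X}
  | n + 2 => smd (star (thickN C (n + 1)) {X | thickOne C X})

/-- The `C`-level of `M`: the least `n` such that `M ∈ thickⁿ(C)` (`⊤` if there is none). -/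
noncomputable def level (C M : T) : ℕ∞ :=
  sInf ((fun n : ℕ => (n : ℕ∞)) '' {n : ℕ | M ∈ thickN C n})


/-- The `n`-fold ∗-power `A^{∗n}` of a class of objects, with the conventions
`A^{∗0} = {0}` and `A^{∗1} = A`, and `A^{∗(n+1)} = A^{∗n} ∗ A`. -/
def starPow (A : Set T) : ℕ → Set T
  | 0 => {X | IsZero X}
  | 1 => A
  | n + 2 => star (starPow A (n + 1)) A


section Aux

/-- iso between a Bool-indexed product and a binary biproduct -/
noncomputable def piBoolIso (g : Bool → T) : (∏ᶜ g : T) ≅ g true ⊞ g false where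
  hom := biprod.lift (Pi.π g true) (Pi.π g false)
  inv := Pi.lift (fun b => Bool.rec (biprod.snd) (biprod.fst) b)
  hom_inv_id := by
    ext b
    rcases b with ⟨_|_⟩ <;> simp
  inv_hom_id := by
    ext <;> simp

/-- a split mono admits a complement in a pretriangulated category -/
lemma exists_compl {X Y : T} (i : X ⟶ Y) (r : Y ⟶ X) (hir : i ≫ r = 𝟙 X) :
    ∃ (K : T) (_ : Y ≅ X ⊞ K), True := by
  obtain ⟨K, p, w, hT⟩ := Pretriangulated.distinguished_cocone_triangle i
  have hw : w = 0 := by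
    have h1 : w ≫ i⟦(1:ℤ)⟧' = 0 := comp_distTriang_mor_zero₃₁ _ hT
    calc w = w ≫ (i ≫ r)⟦(1:ℤ)⟧' := by rw [hir]; simp
    _ = (w ≫ i⟦(1:ℤ)⟧') ≫ r⟦(1:ℤ)⟧' := by rw [Functor.map_comp]; simp
    _ = 0 := by rw [h1]; simp
  obtain ⟨e, -, -⟩ := exists_iso_binaryBiproduct_of_distTriang _ hT hw
  exact ⟨K, e, trivial⟩

lemma subset_smd (A : Set T) : A ⊆ smd A :=
  fun X hX => ⟨X, hX, 𝟙 X, 𝟙 X, by simp⟩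

lemma smd_mono {A B : Set T} (h : A ⊆ B) : smd A ⊆ smd B := by
  rintro X ⟨Y, hY, i, r, hir⟩
  exact ⟨Y, h hY, i, r, hir⟩

lemma smd_smd (A : Set T) : smd (smd A) ⊆ smd A := by
  rintro X ⟨Y, ⟨Z, hZ, i', r', hir'⟩, i, r, hir⟩
  refine ⟨Z, hZ, i ≫ i', r' ≫ r, ?_⟩
  rw [Category.assoc, reassoc_of% hir']
  exact hir

lemma star_mono {A A' B B' : Set T} (hA : A ⊆ A') (hB : B ⊆ B') :
    star A B ⊆ star A' B' := by
  rintro L ⟨M, N, f, g, h, hM, hN, hT⟩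
  exact ⟨M, N, f, g, h, hA hM, hB hN, hT⟩

/-- the key lemma: a ∗-product of retract closures lies in the
retract closure of the ∗-product -/
lemma star_smd_smd_subset (A B : Set T) : star (smd A) (smd B) ⊆ smd (star A B) := by
  rintro L ⟨M', N', f, g, h, ⟨M, hM, iM, rM, hirM⟩, ⟨N, hN, iN, rN, hirN⟩, hT⟩
  obtain ⟨K, eM, -⟩ := exists_compl iM rM hirM
  obtain ⟨Q, eN, -⟩ := exists_compl iN rN hirN
  let T₁ : Triangle T := Triangle.mk f g h
  let T₂ := binaryBiproductTriangle K Q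
  let fam : Bool → Triangle T := fun b => bif b then T₁ else T₂
  have hfam : ∀ b, fam b ∈ distTriang T := by
    rintro (_|_)
    · exact binaryBiproductTriangle_distinguished K Q
    · exact hT
  have hS := productTriangle_distinguished fam hfam
  let S := productTriangle fam
  let u : M ≅ S.obj₁ := eM ≪≫ (piBoolIso fun b => (fam b).obj₁).symm
  let v : N ≅ S.obj₃ := eN ≪≫ (piBoolIso fun b => (fam b).obj₃).symm
  refine ⟨S.obj₂, ⟨M, N, u.hom ≫ S.mor₁, S.mor₂ ≫ v.inv, v.hom ≫ S.mor₃ ≫ u.inv⟦(1:ℤ)⟧',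
    hM, hN, ?_⟩, Pi.lift (fun b => Bool.rec 0 (𝟙 L) b), Pi.π _ true, Pi.lift_π _ _⟩
  refine isomorphic_distinguished _ hS _ ?_
  exact Triangle.isoMk _ _ u (Iso.refl _) v (by exact Category.comp_id _)
    (by show (S.mor₂ ≫ v.inv) ≫ v.hom = 𝟙 S.obj₂ ≫ S.mor₂; simp)
    (by show (v.hom ≫ S.mor₃ ≫ u.inv⟦(1:ℤ)⟧') ≫ u.hom⟦(1:ℤ)⟧' = v.hom ≫ S.mor₃
        simp [← Functor.map_comp])

lemma thickOne_mem_smd {C X : T} (hX : thickOne C X) : X ∈ smd {Y : T | addShift C Y} := by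
  induction hX with
  | base => exact ⟨C, addShift.base, 𝟙 C, 𝟙 C, by simp⟩
  | zero X hX => exact ⟨X, addShift.zero X hX, 𝟙 X, 𝟙 X, by simp⟩
  | shift X n _ ih =>
    obtain ⟨Y, hY, i, r, hir⟩ := ih
    exact ⟨Y⟦n⟧, addShift.shift Y n hY, i⟦n⟧', r⟦n⟧',
      by rw [← Functor.map_comp, hir]; simp⟩
  | coprod X Y _ _ ihX ihY =>
    obtain ⟨Y₁, h1, i1, r1, e1⟩ := ihX
    obtain ⟨Y₂, h2, i2, r2, e2⟩ := ihY
    exact ⟨Y₁ ⊞ Y₂, addShift.coprod _ _ h1 h2, biprod.map i1 i2, biprod.map r1 r2,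
      by ext <;> simp [e1, e2]⟩
  | retract X Y i r hir _ ih =>
    obtain ⟨Z, hZ, i', r', e⟩ := ih
    refine ⟨Z, hZ, i ≫ i', r' ≫ r, ?_⟩
    rw [Category.assoc, reassoc_of% e]
    exact hir
  | iso X Y e _ ih =>
    obtain ⟨Z, hZ, i, r, hir⟩ := ih
    refine ⟨Z, hZ, e.inv ≫ i, r ≫ e.hom, ?_⟩
    rw [Category.assoc, reassoc_of% hir, e.inv_hom_id]

lemma addShift_thickOne {C X : T} (h : addShift C X) : thickOne C X := by
  induction h with
  | base => exact thickOne.base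
  | zero X hX => exact thickOne.zero X hX
  | shift X n _ ih => exact thickOne.shift X n ih
  | coprod X Y _ _ ihX ihY => exact thickOne.coprod X Y ihX ihY
  | iso X Y e _ ih => exact thickOne.iso X Y e ih

lemma thickOne_eq_smd (C : T) : {X : T | thickOne C X} = smd {X : T | addShift C X} := by
  apply Set.Subset.antisymm
  · exact fun X hX => thickOne_mem_smd hX
  · rintro X ⟨Y, hY, i, r, hir⟩
    exact thickOne.retract X Y i r hir (addShift_thickOne hY)

lemma smd_isZero : smd {X : T | IsZero X} = {X : T | IsZero X} := by
  apply Set.Subset.antisymm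
  · rintro X ⟨Y, hY, i, r, hir⟩
    show IsZero X
    rw [IsZero.iff_id_eq_zero, ← hir, hY.eq_of_src r 0, comp_zero]
  · exact subset_smd _

end Aux

/-- `thickⁿ_T(C) = smd(addΣ(C)^{∗n})` (cf. [B-B], [ABIM, 2.2.1]). -/
theorem thickN_eq_smd_starPow_addShift [IsTriangulated T] (C : T) (n : ℕ) :
    thickN C n = smd (starPow {X | addShift C X} n) := by
  induction n using Nat.strong_induction_on with
  | _ n ih =>
    match n with
    | 0 =>
      show {X : T | IsZero X} = smd {X : T | IsZero X}
      rw [smd_isZero]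
    | 1 =>
      exact thickOne_eq_smd C
    | (m + 2) =>
      have ihm := ih (m + 1) (by omega)
      show smd (star (thickN C (m + 1)) {X | thickOne C X})
        = smd (star (starPow {X | addShift C X} (m + 1)) {X | addShift C X})
      rw [ihm, thickOne_eq_smd]
      apply Set.Subset.antisymm
      · exact (smd_mono (star_smd_smd_subset _ _)).trans (smd_smd _)
      · exact smd_mono (star_mono (subset_smd _) (subset_smd _))
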